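/- Fix η ∈ ℝ, labels y with y i ∈ {0,1} for all i and Σᵢ y i > 0, and predictions ŷ with ŷ i ≠ −η for all i. Then as β → +∞, the sigmoidF1 score 2·t̃p(β)/(2·t̃p(β) + f̃n(β) + f̃p(β)) converges to the hard F1 score 2·tp/(2·tp + fn + fp) computed with threshold t = −η (the denominator of the hard F1 is positive since tp + fn = Σᵢ y i > 0). -/

import Mathlib

noncomputable def S (u β η : ℝ) : ℝ := 1 / (1 + Real.exp (-β * (u + η)))

open Filter Topology

lemma S_tendsto (u η : ℝ) (h : u ≠ -η) :
    Tendsto (fun β : ℝ => S u β η) atTop (nhds (if u ≥ -η then (1:ℝ) else 0)) := by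
  rcases lt_or_gt_of_ne h with hlt | hgt
  · have hneg : u + η < 0 := by linarith
    rw [if_neg (by linarith)]
    have h1 : Tendsto (fun β : ℝ => -β * (u + η)) atTop atTop := by
      have heq : (fun β : ℝ => -β * (u + η)) = fun β : ℝ => β * (-(u + η)) := by
        funext β; ring
      rw [heq]; exact tendsto_id.atTop_mul_const (by linarith)
    have h2 : Tendsto (fun β : ℝ => 1 + Real.exp (-β * (u + η))) atTop atTop :=
      tendsto_atTop_add_const_left _ 1 (Real.tendsto_exp_atTop.comp h1)
    have h3 : Tendsto (fun β : ℝ => (1 + Real.exp (-β * (u + η)))⁻¹) atTop (𝓝 0) :=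
      h2.inv_tendsto_atTop
    simpa [S, one_div] using h3
  · have hpos : 0 < u + η := by linarith
    rw [if_pos (by linarith)]
    have h1 : Tendsto (fun β : ℝ => -β * (u + η)) atTop atBot := by
      have heq : (fun β : ℝ => -β * (u + η)) = fun β : ℝ => -(β * (u + η)) := by
        funext β; ring
      rw [heq]
      exact tendsto_neg_atTop_atBot.comp (tendsto_id.atTop_mul_const hpos)
    have h2 : Tendsto (fun β : ℝ => 1 + Real.exp (-β * (u + η))) atTop (nhds (1 + 0)) :=
      tendsto_const_nhds.add (Real.tendsto_exp_atBot.comp h1)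
    simpa [S, one_div] using h2.inv₀ (by norm_num)

theorem sigmoidF1_tendsto_hardF1 (n : ℕ) (yhat y : Fin n → ℝ) (η : ℝ)
    (hy : ∀ i, y i = 0 ∨ y i = 1) (hpos : 0 < ∑ i, y i)
    (hne : ∀ i, yhat i ≠ -η) :
    Filter.Tendsto
      (fun β : ℝ =>
        2 * (∑ i, S (yhat i) β η * y i) /
          (2 * (∑ i, S (yhat i) β η * y i) + (∑ i, (1 - S (yhat i) β η) * y i) +
            (∑ i, S (yhat i) β η * (1 - y i))))
      Filter.atTop
      (nhds (2 * (∑ i, (if yhat i ≥ -η then (1:ℝ) else 0) * y i) /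
        (2 * (∑ i, (if yhat i ≥ -η then (1:ℝ) else 0) * y i) +
          (∑ i, (if yhat i < -η then (1:ℝ) else 0) * y i) +
          (∑ i, (if yhat i ≥ -η then (1:ℝ) else 0) * (1 - y i))))) := by
  set c : Fin n → ℝ := fun i => if yhat i ≥ -η then (1:ℝ) else 0 with hc
  have hS : ∀ i, Tendsto (fun β : ℝ => S (yhat i) β η) atTop (nhds (c i)) :=
    fun i => S_tendsto _ _ (hne i)
  have hif : ∀ i, (if yhat i < -η then (1:ℝ) else 0) = 1 - c i := by
    intro i
    by_cases h : yhat i ≥ -η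
    · simp [hc, h, not_lt.mpr h]
    · simp [hc, h, lt_of_not_ge h]
  have htp : Tendsto (fun β : ℝ => ∑ i, S (yhat i) β η * y i) atTop
      (nhds (∑ i, c i * y i)) :=
    tendsto_finset_sum _ (fun i _ => (hS i).mul_const _)
  have hfn : Tendsto (fun β : ℝ => ∑ i, (1 - S (yhat i) β η) * y i) atTop
      (nhds (∑ i, (1 - c i) * y i)) :=
    tendsto_finset_sum _ (fun i _ => ((tendsto_const_nhds.sub (hS i)).mul_const _))
  have hfp : Tendsto (fun β : ℝ => ∑ i, S (yhat i) β η * (1 - y i)) atTop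
      (nhds (∑ i, c i * (1 - y i))) :=
    tendsto_finset_sum _ (fun i _ => (hS i).mul_const _)
  have hden_ne : 2 * (∑ i, c i * y i) + (∑ i, (1 - c i) * y i) + (∑ i, c i * (1 - y i)) ≠ 0 := by
    have h1 : (∑ i, c i * y i) + (∑ i, (1 - c i) * y i) = ∑ i, y i := by
      rw [← Finset.sum_add_distrib]; congr 1; ext i; ring
    have h2 : 0 ≤ ∑ i, c i * y i := by
      apply Finset.sum_nonneg; intro i _
      rcases hy i with h | h <;> simp [hc, h] <;> positivity
    have h3 : 0 ≤ ∑ i, c i * (1 - y i) := by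
      apply Finset.sum_nonneg; intro i _
      rcases hy i with h | h <;> simp [hc, h] <;> positivity
    nlinarith
  have := (htp.const_mul 2).div ((htp.const_mul 2).add hfn |>.add hfp) hden_ne
  have hgoal : (∑ i, (if yhat i < -η then (1:ℝ) else 0) * y i) = ∑ i, (1 - c i) * y i :=
    Finset.sum_congr rfl (fun i _ => by rw [hif i])
  rw [hgoal]
  exact this
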